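/- Let n ≥ 1 and G = ℝⁿ \ {0}. For all x, y ∈ G one has s_G(x,y) ≤ (1/log 3) · j_G(x,y), i.e. log 3 · |x−y|/(|x|+|y|) ≤ log(1 + |x−y|/min{|x|,|y|}). -/
import Mathlib


/-- Let n ≥ 1 and G = ℝⁿ \ {0}. For all x, y ∈ G one has
s_G(x,y) ≤ (1/log 3) · j_G(x,y), i.e.
log 3 · |x−y|/(|x|+|y|) ≤ log(1 + |x−y|/min{|x|,|y|}). -/
theorem s_le_inv_log_three_mul_j_punctured (n : ℕ) (hn : 1 ≤ n)
    (x y : EuclideanSpace ℝ (Fin n)) (hx : x ≠ 0) (hy : y ≠ 0) :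
    Real.log 3 * (dist x y / (‖x‖ + ‖y‖)) ≤
      Real.log (1 + dist x y / min ‖x‖ ‖y‖) := by
  have hx' : 0 < ‖x‖ := norm_pos_iff.mpr hx
  have hy' : 0 < ‖y‖ := norm_pos_iff.mpr hy
  set d := dist x y with hd
  have hd0 : 0 ≤ d := dist_nonneg
  have hsum : 0 < ‖x‖ + ‖y‖ := by positivity
  have hdle : d ≤ ‖x‖ + ‖y‖ := by
    calc d ≤ dist x 0 + dist 0 y := dist_triangle _ _ _
    _ = ‖x‖ + ‖y‖ := by simp
  set t := d / (‖x‖ + ‖y‖) with ht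
  have ht0 : 0 ≤ t := by positivity
  have ht1 : t ≤ 1 := by rw [ht, div_le_one hsum]; exact hdle
  have hm : 0 < min ‖x‖ ‖y‖ := lt_min hx' hy'
  have key : Real.exp (t * Real.log 3) ≤ 1 + 2 * t := by
    have h := convexOn_exp.2 (Set.mem_univ (0 : ℝ)) (Set.mem_univ (Real.log 3))
      (by linarith : (0:ℝ) ≤ 1 - t) ht0 (by ring)
    simp only [smul_eq_mul, mul_zero, zero_add] at h
    rw [Real.exp_zero, Real.exp_log (by norm_num : (0:ℝ) < 3)] at h
    calc Real.exp (t * Real.log 3) ≤ (1 - t) * 1 + t * 3 := h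
    _ = 1 + 2 * t := by ring
  have h2 : 1 + 2 * t ≤ 1 + d / min ‖x‖ ‖y‖ := by
    have h2t : 2 * t = 2 * d / (‖x‖ + ‖y‖) := by rw [ht]; ring
    have hmin1 : min ‖x‖ ‖y‖ ≤ ‖x‖ := min_le_left _ _
    have hmin2 : min ‖x‖ ‖y‖ ≤ ‖y‖ := min_le_right _ _
    have : 2 * d / (‖x‖ + ‖y‖) ≤ d / min ‖x‖ ‖y‖ := by
      rw [div_le_div_iff₀ hsum hm]
      nlinarith
    linarith [h2t ▸ this]
  have hpos : 0 < 1 + 2 * t := by linarith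
  have step1 : t * Real.log 3 ≤ Real.log (1 + 2 * t) :=
    (Real.le_log_iff_exp_le hpos).mpr key
  have step2 : Real.log (1 + 2 * t) ≤ Real.log (1 + d / min ‖x‖ ‖y‖) :=
    Real.log_le_log hpos h2
  calc Real.log 3 * t = t * Real.log 3 := by ring
  _ ≤ _ := le_trans step1 step2
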